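/- Theorem 3 (maximal partial sums of Fourier series in Grand Lebesgue norms). Let X = [−π, π] with Lebesgue measure, let 1 < a < b ≤ ∞ and ψ ∈ Ψ(a,b). For a measurable f : [−π,π] → ℝ belonging to L^p for all p ∈ (a,b), define the Fourier coefficients c_n(f) = ∫_{−π}^{π} e^{inx} f(x) dx (n ∈ ℤ), the partial sums s_M[f](x) = (2π)^{−1} Σ_{|n|≤M} c_n(f) e^{−inx}, and the maximal function s*[f](x) = sup_{M≥1} |s_M[f](x)|. Assume the Carleson–Hunt maximal estimate: there is a constant C₀ such that for every p ∈ (1,∞) and every g ∈ L^p([−π,π]), ‖s*[g]‖_{L^p} ≤ C₀ · p^4 (p−1)^{−2} · ‖g‖_{L^p}. Then, with ψ₂(p) = p^4 ψ(p)/(p−1)^2 for p ∈ (a,b), every measurable f with ‖f‖_{G(ψ)} < ∞ satisfies ‖s*[f]‖_{G(ψ₂)} ≤ C₀ · ‖f‖_{G(ψ)}. -/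

import Mathlib

open MeasureTheory ENNReal Set

noncomputable section

/-- The set of exponents p with a < p and p < b (b may be infinite). -/
def expSet (a : ℝ) (b : ℝ≥0∞) : Set ℝ := {p : ℝ | a < p ∧ ENNReal.ofReal p < b}

/-- The class Ψ(a,b). -/
structure IsPsi (a : ℝ) (b : ℝ≥0∞) (ψ : ℝ → ℝ) : Prop where
  one_le : ∀ p ∈ expSet a b, 1 ≤ ψ p
  bddOnCompacts : ∀ c d : ℝ, c ∈ expSet a b → d ∈ expSet a b → BddAbove (ψ '' Set.Icc c d)
  logConvex : ConvexOn ℝ (expSet a b) fun p => Real.log (ψ p)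

/-- L^p norm (real exponent). -/
def lpNorm {X : Type*} [MeasurableSpace X] (μ : Measure X) (f : X → ℝ) (p : ℝ) : ℝ≥0∞ :=
  (∫⁻ x, ENNReal.ofReal (|f x| ^ p) ∂μ) ^ (1 / p)

/-- Bilateral Grand Lebesgue norm. -/
def glNorm {X : Type*} [MeasurableSpace X] (μ : Measure X) (a : ℝ) (b : ℝ≥0∞) (ψ : ℝ → ℝ)
    (f : X → ℝ) : ℝ≥0∞ :=
  ⨆ p ∈ expSet a b, lpNorm μ f p / ENNReal.ofReal (ψ p)

/-- L^p norm for extended-real-valued functions. -/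
def lpNormE {X : Type*} [MeasurableSpace X] (μ : Measure X) (g : X → EReal) (p : ℝ) : ℝ≥0∞ :=
  (∫⁻ x, (g x).abs ^ p ∂μ) ^ (1 / p)

/-- Bilateral Grand Lebesgue norm for extended-real-valued functions. -/
def glNormE {X : Type*} [MeasurableSpace X] (μ : Measure X) (a : ℝ) (b : ℝ≥0∞) (ψ : ℝ → ℝ)
    (g : X → EReal) : ℝ≥0∞ :=
  ⨆ p ∈ expSet a b, lpNormE μ g p / ENNReal.ofReal (ψ p)

/-- L^p norm for `ℝ≥0∞`-valued functions. -/
def lpNormNN {X : Type*} [MeasurableSpace X] (μ : Measure X) (g : X → ℝ≥0∞) (p : ℝ) : ℝ≥0∞ :=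
  (∫⁻ x, g x ^ p ∂μ) ^ (1 / p)

end

noncomputable section Fourier

/-- Lebesgue measure on `[-π, π]`. -/
def muPi : Measure ℝ := volume.restrict (Set.Icc (-Real.pi) Real.pi)

/-- Fourier coefficients `c_n(f) = ∫_{-π}^{π} e^{inx} f(x) dx`. -/
def fourierCoef (f : ℝ → ℝ) (n : ℤ) : ℂ :=
  ∫ x, Complex.exp (Complex.I * n * x) * (f x : ℂ) ∂muPi

/-- Partial sums `s_M[f](x) = (2π)⁻¹ ∑_{|n| ≤ M} c_n(f) e^{-inx}`. -/
def fourierPartialSum (f : ℝ → ℝ) (M : ℕ) (x : ℝ) : ℂ :=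
  (2 * Real.pi : ℂ)⁻¹ *
    ∑ n ∈ Finset.Icc (-(M : ℤ)) (M : ℤ), fourierCoef f n * Complex.exp (-(Complex.I * n * x))

/-- Maximal function `s*[f](x) = sup_{M ≥ 1} |s_M[f](x)|` (with values in `ℝ≥0∞`). -/
def fourierMaximal (f : ℝ → ℝ) (x : ℝ) : ℝ≥0∞ :=
  ⨆ M : ℕ, ⨆ _ : 1 ≤ M, ENNReal.ofReal ‖fourierPartialSum f M x‖

/-- Theorem 3 (maximal partial sums of Fourier series in Grand Lebesgue norms). -/
theorem fourier_maximal_BGL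
    (a : ℝ) (b : ℝ≥0∞) (ha : 1 < a) (hab : ENNReal.ofReal a < b)
    (ψ : ℝ → ℝ) (hψ : IsPsi a b ψ)
    (C₀ : ℝ)
    (hCarlesonHunt : ∀ p : ℝ, 1 < p → ∀ g : ℝ → ℝ, Measurable g → lpNorm muPi g p < ⊤ →
      lpNormNN muPi (fourierMaximal g) p ≤
        ENNReal.ofReal (C₀ * p ^ 4 / (p - 1) ^ 2) * lpNorm muPi g p)
    (f : ℝ → ℝ) (hf : Measurable f)
    (hfLp : ∀ p ∈ expSet a b, lpNorm muPi f p < ⊤)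
    (hfG : glNorm muPi a b ψ f < ⊤) :
    (⨆ p ∈ expSet a b,
        lpNormNN muPi (fourierMaximal f) p / ENNReal.ofReal (p ^ 4 * ψ p / (p - 1) ^ 2)) ≤
      ENNReal.ofReal C₀ * glNorm muPi a b ψ f := by
  apply iSup₂_le
  intro p hp
  obtain ⟨hap, hpb⟩ := hp
  have hp1 : 1 < p := ha.trans hap
  have hψ1 : 1 ≤ ψ p := hψ.one_le p ⟨hap, hpb⟩
  have hψ0 : 0 < ψ p := lt_of_lt_of_le one_pos hψ1
  have hden : (0:ℝ) < (p - 1) ^ 2 := pow_pos (by linarith) 2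
  have hp0 : (0:ℝ) < p := by linarith
  have hX : (0:ℝ) < p ^ 4 * ψ p / (p - 1) ^ 2 :=
    div_pos (mul_pos (by positivity) hψ0) hden
  have h1 := hCarlesonHunt p hp1 f hf (hfLp p ⟨hap, hpb⟩)
  have h2 : lpNorm muPi f p ≤ glNorm muPi a b ψ f * ENNReal.ofReal (ψ p) := by
    rw [← ENNReal.div_le_iff (by simp [hψ0, hψ0.not_ge]) ENNReal.ofReal_ne_top]
    exact le_iSup₂ (f := fun p (_ : p ∈ expSet a b) => lpNorm muPi f p / ENNReal.ofReal (ψ p))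
      p ⟨hap, hpb⟩
  apply ENNReal.div_le_of_le_mul
  calc lpNormNN muPi (fourierMaximal f) p
      ≤ ENNReal.ofReal (C₀ * p ^ 4 / (p - 1) ^ 2) * lpNorm muPi f p := h1
    _ ≤ ENNReal.ofReal (C₀ * p ^ 4 / (p - 1) ^ 2) *
          (glNorm muPi a b ψ f * ENNReal.ofReal (ψ p)) := by
        exact mul_le_mul_right h2 _
    _ = ENNReal.ofReal (C₀ * p ^ 4 / (p - 1) ^ 2) * ENNReal.ofReal (ψ p) *
          glNorm muPi a b ψ f := by ring
    _ = ENNReal.ofReal (C₀ * (p ^ 4 * ψ p / (p - 1) ^ 2)) * glNorm muPi a b ψ f := by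
        rw [← ENNReal.ofReal_mul' hψ0.le]; ring_nf
    _ = ENNReal.ofReal C₀ * ENNReal.ofReal (p ^ 4 * ψ p / (p - 1) ^ 2) *
          glNorm muPi a b ψ f := by rw [ENNReal.ofReal_mul' hX.le]
    _ = ENNReal.ofReal C₀ * glNorm muPi a b ψ f *
          ENNReal.ofReal (p ^ 4 * ψ p / (p - 1) ^ 2) := by ring

end Fourier
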